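/- Let D > 0, c ∈ ℝ, r₁, r₂ > 0, ĥ₁, ĥ₂, ĝ₂ > 0, n > 0 and L₀ > 0. Suppose U₁, U₂ : [0, L₀] → ℝ are twice continuously differentiable, with Uᵢ(0) = Uᵢ(L₀) = 0, Uᵢ(ξ) > 0 for ξ ∈ (0, L₀), D U₁''(ξ) + c U₁'(ξ) + U₁(ξ)(r₁ − (ĥ₁ U₁(ξ))ⁿ) = 0 and D U₂''(ξ) + c U₂'(ξ) + U₂(ξ)(r₂ − (ĥ₂ U₂(ξ))ⁿ) = 0 for all ξ ∈ (0, L₀). If r₂ ≤ r₁ and (r₂/r₁)^{1/n} ĥ₁ ≤ ĝ₂, then ĝ₂ U₁(ξ) ≥ ĥ₂ U₂(ξ) for all ξ ∈ [0, L₀]. -/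

import Mathlib

open Set Real

open Filter Topology

lemma second_deriv_nonpos_at_max {U : ℝ → ℝ} {L ξM : ℝ}
    (hreg : ContDiffOn ℝ 2 U (Icc 0 L)) (hmem : ξM ∈ Ioo 0 L)
    (hmax : IsMaxOn U (Icc 0 L) ξM) :
    deriv (deriv U) ξM ≤ 0 := by
  by_contra h
  push_neg at h
  have hopen : IsOpen (Ioo (0:ℝ) L) := isOpen_Ioo
  have hC1 : ContDiffOn ℝ 1 (deriv U) (Ioo 0 L) :=
    (hreg.mono Ioo_subset_Icc_self).deriv_of_isOpen hopen (by norm_num)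
  have hgd : HasDerivAt (deriv U) (deriv (deriv U) ξM) ξM :=
    (((hC1.differentiableOn one_ne_zero) ξM hmem).differentiableAt (hopen.mem_nhds hmem)).hasDerivAt
  have hloc : IsLocalMax U ξM := by
    filter_upwards [Icc_mem_nhds hmem.1 hmem.2] with x hx using hmax hx
  have hg0 : deriv U ξM = 0 := hloc.deriv_eq_zero
  have hslope : Tendsto (slope (deriv U) ξM) (𝓝[≠] ξM) (𝓝 (deriv (deriv U) ξM)) :=
    hasDerivAt_iff_tendsto_slope.mp hgd
  have hev : ∀ᶠ x in 𝓝[<] ξM, 0 < slope (deriv U) ξM x :=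
    ((hslope.eventually (eventually_gt_nhds h)).filter_mono
      (nhdsWithin_mono _ (fun x hx => ne_of_lt hx)))
  have hev2 : ∀ᶠ x in 𝓝[<] ξM, x ∈ Ioo 0 L ∧ deriv U x < 0 := by
    filter_upwards [hev, self_mem_nhdsWithin, eventually_nhdsWithin_of_eventually_nhds
      (hopen.eventually_mem hmem)] with x hx hxlt hx2
    refine ⟨hx2, ?_⟩
    have hsl : slope (deriv U) ξM x = deriv U x / (x - ξM) := by
      rw [slope_def_field, hg0]; ring
    rw [hsl] at hx
    have hden : x - ξM < 0 := by simp only [mem_Iio] at hxlt; linarith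
    by_contra hge
    push_neg at hge
    have := div_nonpos_of_nonneg_of_nonpos hge hden.le
    linarith
  obtain ⟨l, hl, hsub⟩ := mem_nhdsLT_iff_exists_Ioo_subset.mp hev2
  -- pick y ∈ Ioo l ξM with 0 ≤ y
  set y := (max l 0 + ξM) / 2 with hy
  have hξMpos : 0 < ξM := hmem.1
  have hly : l < y := by
    have : l ≤ max l 0 := le_max_left _ _
    have : max l 0 < ξM := max_lt hl hξMpos
    simp only [hy]
    have := le_max_left l 0
    nlinarith [max_lt hl hξMpos, le_max_left l 0]
  have hyξM : y < ξM := by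
    have := max_lt hl hξMpos
    simp only [hy]; linarith
  have hymem : y ∈ Ioo l ξM := ⟨hly, hyξM⟩
  have hy0 : 0 ≤ y := by
    have := le_max_right l 0
    simp only [hy]; nlinarith [hξMpos, le_max_right l 0]
  have hyIoo : y ∈ Ioo 0 L := (hsub hymem).1
  -- U strictly antitone on Icc y ξM
  have hanti : StrictAntiOn U (Icc y ξM) := by
    apply strictAntiOn_of_deriv_neg (convex_Icc y ξM)
    · exact hreg.continuousOn.mono (Icc_subset_Icc hy0 hmem.2.le)
    · rw [interior_Icc]
      intro x hx
      have : x ∈ Ioo l ξM := ⟨lt_trans hly hx.1, hx.2⟩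
      exact (hsub this).2
  have h1 : U ξM < U y := hanti (left_mem_Icc.2 hyξM.le) (right_mem_Icc.2 hyξM.le) hyξM
  have h2 : U y ≤ U ξM := hmax ⟨hy0, le_trans hyξM.le hmem.2.le⟩
  linarith

private lemma arith_mp {D k d u r X : ℝ} (hD : 0 < D) (hd : d ≤ 0) (hu : 0 < u)
    (h : D * d + k * D * 0 + u * (r - X) = 0) : X ≤ r := by
  by_contra hX
  push_neg at hX
  nlinarith [mul_pos hu (sub_pos.2 hX), mul_nonneg hD.le (neg_nonneg.2 hd)]

private lemma arith_bfac {r₁ r₂ X₁ X₂ Z : ℝ} (hr₁ : 0 < r₁) (hr : r₂ ≤ r₁)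
    (hX₁ : X₁ ≤ r₁) (hZ : r₂ * X₁ ≤ r₁ * Z) (hX₂ : Z < X₂) :
    0 < (r₁ - X₁) - (r₂ - X₂) := by
  nlinarith

theorem stmt14 (D c r₁ r₂ hhat₁ hhat₂ ghat₂ n L₀ : ℝ)
    (hD : 0 < D) (hr₁ : 0 < r₁) (hr₂ : 0 < r₂)
    (hh₁ : 0 < hhat₁) (hh₂ : 0 < hhat₂) (hg₂ : 0 < ghat₂) (hn : 0 < n) (hL₀ : 0 < L₀)
    (U₁ U₂ : ℝ → ℝ)
    (hreg₁ : ContDiffOn ℝ 2 U₁ (Icc 0 L₀)) (hreg₂ : ContDiffOn ℝ 2 U₂ (Icc 0 L₀))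
    (hbc₁ : U₁ 0 = 0 ∧ U₁ L₀ = 0) (hbc₂ : U₂ 0 = 0 ∧ U₂ L₀ = 0)
    (hpos₁ : ∀ ξ ∈ Ioo 0 L₀, 0 < U₁ ξ) (hpos₂ : ∀ ξ ∈ Ioo 0 L₀, 0 < U₂ ξ)
    (hode₁ : ∀ ξ ∈ Ioo 0 L₀,
      D * deriv (deriv U₁) ξ + c * deriv U₁ ξ + U₁ ξ * (r₁ - (hhat₁ * U₁ ξ) ^ n) = 0)
    (hode₂ : ∀ ξ ∈ Ioo 0 L₀,
      D * deriv (deriv U₂) ξ + c * deriv U₂ ξ + U₂ ξ * (r₂ - (hhat₂ * U₂ ξ) ^ n) = 0)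
    (hr : r₂ ≤ r₁)
    (hgh : (r₂ / r₁) ^ (1 / n) * hhat₁ ≤ ghat₂) :
    ∀ ξ ∈ Icc 0 L₀, hhat₂ * U₂ ξ ≤ ghat₂ * U₁ ξ := by
  obtain ⟨hbc10, hbc1L⟩ := hbc₁
  obtain ⟨hbc20, hbc2L⟩ := hbc₂
  obtain ⟨k, hck⟩ : ∃ k, c = k * D := ⟨c / D, by field_simp⟩
  subst hck
  set lam := ghat₂ / hhat₂ with hlam
  have hlam_pos : 0 < lam := div_pos hg₂ hh₂
  set f := fun ξ => U₂ ξ - lam * U₁ ξ with hfdef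
  have hcont₁ : ContinuousOn U₁ (Icc 0 L₀) := hreg₁.continuousOn
  have hcont₂ : ContinuousOn U₂ (Icc 0 L₀) := hreg₂.continuousOn
  have hcontf : ContinuousOn f (Icc 0 L₀) := hcont₂.sub (continuousOn_const.mul hcont₁)
  suffices hS : ∀ ξ ∈ Icc 0 L₀, f ξ ≤ 0 by
    intro ξ hξ
    have h1 : U₂ ξ - lam * U₁ ξ ≤ 0 := hS ξ hξ
    have h2 : hhat₂ * lam = ghat₂ := by rw [hlam]; field_simp [hlam]
    have h4 : hhat₂ * (U₂ ξ - lam * U₁ ξ) ≤ 0 := mul_nonpos_of_nonneg_of_nonpos hh₂.le h1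
    have h5 : hhat₂ * (U₂ ξ - lam * U₁ ξ) = hhat₂ * U₂ ξ - hhat₂ * lam * U₁ ξ := by ring
    have h3 : hhat₂ * U₂ ξ ≤ hhat₂ * lam * U₁ ξ := by linarith
    rw [h2] at h3; exact h3
  by_contra hcon
  push_neg at hcon
  obtain ⟨ξ', hξ', hfξ'⟩ := hcon
  -- max of f
  obtain ⟨ξ₀, hξ₀mem, hmaxf⟩ := isCompact_Icc.exists_isMaxOn (nonempty_Icc.2 hL₀.le) hcontf
  have hfξ₀ : 0 < f ξ₀ := lt_of_lt_of_le hfξ' (hmaxf hξ')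
  have hf0 : f 0 = 0 := by simp [hfdef, hbc10, hbc20]
  have hfL : f L₀ = 0 := by simp [hfdef, hbc1L, hbc2L]
  have hξ₀Ioo : ξ₀ ∈ Ioo 0 L₀ := by
    constructor
    · rcases eq_or_lt_of_le hξ₀mem.1 with h | h
      · rw [← h] at hfξ₀; rw [hf0] at hfξ₀; exact absurd hfξ₀ (lt_irrefl 0)
      · exact h
    · rcases eq_or_lt_of_le hξ₀mem.2 with h | h
      · rw [h] at hfξ₀; rw [hfL] at hfξ₀; exact absurd hfξ₀ (lt_irrefl 0)
      · exact h
  -- the interval (a, b) around ξ₀ where f > 0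
  set S := {ξ : ℝ | ξ ∈ Icc 0 ξ₀ ∧ f ξ ≤ 0} with hSdef
  have hSsub : S ⊆ Icc 0 ξ₀ := fun x hx => hx.1
  have hScl : IsClosed S := by
    have : S = Icc 0 ξ₀ ∩ f ⁻¹' (Iic 0) := rfl
    rw [this]
    exact ContinuousOn.preimage_isClosed_of_isClosed
      (hcontf.mono (Icc_subset_Icc le_rfl hξ₀mem.2)) isClosed_Icc isClosed_Iic
  have hScomp : IsCompact S := isCompact_Icc.of_isClosed_subset hScl hSsub
  have hSne : S.Nonempty := ⟨0, ⟨left_mem_Icc.2 hξ₀mem.1, hf0.le⟩⟩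
  set a := sSup S with hadef
  have haS : a ∈ S := hScomp.sSup_mem hSne
  have ha0 : 0 ≤ a := haS.1.1
  have haξ₀ : a < ξ₀ := by
    rcases eq_or_lt_of_le haS.1.2 with h | h
    · rw [h] at haS; linarith [haS.2, hfξ₀]
    · exact h
  have hfpos_left : ∀ x ∈ Ioc a ξ₀, 0 < f x := by
    intro x hx
    by_contra hle
    push_neg at hle
    have hxS : x ∈ S := ⟨⟨le_trans ha0 hx.1.le, hx.2⟩, hle⟩
    exact absurd (le_csSup hScomp.bddAbove hxS) (not_le.2 hx.1)
  have haIcc : a ∈ Icc 0 L₀ := ⟨ha0, le_trans haS.1.2 hξ₀mem.2⟩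
  have hsub_aξ₀ : Ioo a ξ₀ ⊆ Icc 0 L₀ := fun x hx =>
    ⟨le_trans ha0 hx.1.le, le_trans hx.2.le hξ₀mem.2⟩
  have hne_a : (𝓝[Ioo a ξ₀] a).NeBot := by
    apply mem_closure_iff_nhdsWithin_neBot.mp
    rw [closure_Ioo (ne_of_lt haξ₀)]
    exact ⟨le_refl a, haξ₀.le⟩
  have hfa : f a = 0 := by
    refine le_antisymm haS.2 ?_
    have hta : Tendsto f (𝓝[Ioo a ξ₀] a) (𝓝 (f a)) := (hcontf a haIcc).mono hsub_aξ₀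
    exact ge_of_tendsto hta (eventually_mem_nhdsWithin.mono
      (fun x hx => (hfpos_left x ⟨hx.1, hx.2.le⟩).le))
  -- right side
  set T := {ξ : ℝ | ξ ∈ Icc ξ₀ L₀ ∧ f ξ ≤ 0} with hTdef
  have hTsub : T ⊆ Icc ξ₀ L₀ := fun x hx => hx.1
  have hTcl : IsClosed T := by
    have : T = Icc ξ₀ L₀ ∩ f ⁻¹' (Iic 0) := rfl
    rw [this]
    exact ContinuousOn.preimage_isClosed_of_isClosed
      (hcontf.mono (Icc_subset_Icc hξ₀mem.1 le_rfl)) isClosed_Icc isClosed_Iic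
  have hTcomp : IsCompact T := isCompact_Icc.of_isClosed_subset hTcl hTsub
  have hTne : T.Nonempty := ⟨L₀, ⟨right_mem_Icc.2 hξ₀mem.2, hfL.le⟩⟩
  set b := sInf T with hbdef
  have hbT : b ∈ T := hTcomp.sInf_mem hTne
  have hbL : b ≤ L₀ := hbT.1.2
  have hξ₀b : ξ₀ < b := by
    rcases eq_or_lt_of_le hbT.1.1 with h | h
    · exfalso; rw [← h] at hbT; linarith [hbT.2, hfξ₀]
    · exact h
  have hfpos_right : ∀ x ∈ Ico ξ₀ b, 0 < f x := by
    intro x hx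
    by_contra hle
    push_neg at hle
    have hxT : x ∈ T := ⟨⟨hx.1, lt_of_lt_of_le hx.2 hbL |>.le⟩, hle⟩
    exact absurd (csInf_le hTcomp.bddBelow hxT) (not_le.2 hx.2)
  have hbIcc : b ∈ Icc 0 L₀ := ⟨le_trans hξ₀mem.1 hbT.1.1, hbL⟩
  have hsub_ξ₀b : Ioo ξ₀ b ⊆ Icc 0 L₀ := fun x hx =>
    ⟨le_trans hξ₀mem.1 hx.1.le, le_trans hx.2.le hbL⟩
  have hne_b : (𝓝[Ioo ξ₀ b] b).NeBot := by
    apply mem_closure_iff_nhdsWithin_neBot.mp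
    rw [closure_Ioo (ne_of_lt hξ₀b)]
    exact ⟨hξ₀b.le, le_refl b⟩
  have hfb : f b = 0 := by
    refine le_antisymm hbT.2 ?_
    have htb : Tendsto f (𝓝[Ioo ξ₀ b] b) (𝓝 (f b)) := (hcontf b hbIcc).mono hsub_ξ₀b
    exact ge_of_tendsto htb (eventually_mem_nhdsWithin.mono
      (fun x hx => (hfpos_right x ⟨hx.1.le, hx.2⟩).le))
  have hab : a < b := haξ₀.trans hξ₀b
  have habI : Icc a b ⊆ Icc 0 L₀ := Icc_subset_Icc ha0 hbL
  have habIoo : Ioo a b ⊆ Ioo 0 L₀ := fun x hx =>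
    ⟨lt_of_le_of_lt ha0 hx.1, lt_of_lt_of_le hx.2 hbL⟩
  have hfposab : ∀ x ∈ Ioo a b, 0 < f x := by
    intro x hx
    rcases le_or_gt x ξ₀ with h | h
    · exact hfpos_left x ⟨hx.1, h⟩
    · exact hfpos_right x ⟨h.le, hx.2⟩
  -- nonnegativity
  have hU₁nonneg : ∀ ξ ∈ Icc 0 L₀, 0 ≤ U₁ ξ := by
    intro ξ hξ
    rcases eq_or_lt_of_le hξ.1 with h | h
    · rw [← h, hbc10]
    rcases eq_or_lt_of_le hξ.2 with h' | h'
    · rw [h', hbc1L]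
    exact (hpos₁ ξ ⟨h, h'⟩).le
  -- maximum principle bound : (hhat₁ U₁)^n ≤ r₁
  obtain ⟨ξM, hξMmem, hmax₁⟩ := isCompact_Icc.exists_isMaxOn (nonempty_Icc.2 hL₀.le) hcont₁
  have hmidIoo : L₀ / 2 ∈ Ioo (0:ℝ) L₀ := ⟨by linarith, by linarith⟩
  have hU₁ξM_pos : 0 < U₁ ξM :=
    lt_of_lt_of_le (hpos₁ (L₀/2) hmidIoo) (hmax₁ ⟨by linarith, by linarith⟩)
  have hξMIoo : ξM ∈ Ioo 0 L₀ := by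
    constructor
    · rcases eq_or_lt_of_le hξMmem.1 with h | h
      · rw [← h, hbc10] at hU₁ξM_pos; exact absurd hU₁ξM_pos (lt_irrefl 0)
      · exact h
    · rcases eq_or_lt_of_le hξMmem.2 with h | h
      · rw [h, hbc1L] at hU₁ξM_pos; exact absurd hU₁ξM_pos (lt_irrefl 0)
      · exact h
  have hd2 : deriv (deriv U₁) ξM ≤ 0 := second_deriv_nonpos_at_max hreg₁ hξMIoo hmax₁
  have hd1 : deriv U₁ ξM = 0 := by
    apply IsLocalMax.deriv_eq_zero
    filter_upwards [Icc_mem_nhds hξMIoo.1 hξMIoo.2] with x hx using hmax₁ hx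
  have hXM : (hhat₁ * U₁ ξM) ^ n ≤ r₁ := by
    have hODE := hode₁ ξM hξMIoo
    rw [hd1] at hODE
    exact arith_mp hD hd2 hU₁ξM_pos hODE
  have hbound : ∀ ξ ∈ Icc 0 L₀, (hhat₁ * U₁ ξ) ^ n ≤ r₁ := by
    intro ξ hξ
    refine le_trans (Real.rpow_le_rpow (mul_nonneg hh₁.le (hU₁nonneg ξ hξ)) ?_ hn.le) hXM
    exact mul_le_mul_of_nonneg_left (hmax₁ hξ) hh₁.le
  -- derivatives within
  set V₁ := derivWithin U₁ (Icc 0 L₀) with hV₁def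
  set V₂ := derivWithin U₂ (Icc 0 L₀) with hV₂def
  have hud : UniqueDiffOn ℝ (Icc (0:ℝ) L₀) := uniqueDiffOn_Icc hL₀
  have hdiff₁ : DifferentiableOn ℝ U₁ (Icc 0 L₀) := hreg₁.differentiableOn two_ne_zero
  have hdiff₂ : DifferentiableOn ℝ U₂ (Icc 0 L₀) := hreg₂.differentiableOn two_ne_zero
  have hcV₁ : ContinuousOn V₁ (Icc 0 L₀) := hreg₁.continuousOn_derivWithin hud one_le_two
  have hcV₂ : ContinuousOn V₂ (Icc 0 L₀) := hreg₂.continuousOn_derivWithin hud one_le_two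
  -- slope sign at a
  have hda : 0 ≤ V₂ a - lam * V₁ a := by
    have h1 : HasDerivWithinAt f (V₂ a - lam * V₁ a) (Icc 0 L₀) a :=
      ((hdiff₂ a haIcc).hasDerivWithinAt).sub (((hdiff₁ a haIcc).hasDerivWithinAt).const_mul lam)
    have h2 : HasDerivWithinAt f (V₂ a - lam * V₁ a) (Ioo a ξ₀) a := h1.mono hsub_aξ₀
    rw [hasDerivWithinAt_iff_tendsto_slope,
      diff_singleton_eq_self (notMem_Ioo_of_le le_rfl)] at h2
    refine ge_of_tendsto h2 ?_
    filter_upwards [self_mem_nhdsWithin] with x hx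
    have hfx : 0 < f x := hfpos_left x ⟨hx.1, hx.2.le⟩
    have hsl : slope f a x = f x / (x - a) := by rw [slope_def_field, hfa]; ring
    rw [hsl]
    exact div_nonneg hfx.le (sub_pos.2 hx.1).le
  -- slope sign at b
  have hdb : V₂ b - lam * V₁ b ≤ 0 := by
    have h1 : HasDerivWithinAt f (V₂ b - lam * V₁ b) (Icc 0 L₀) b :=
      ((hdiff₂ b hbIcc).hasDerivWithinAt).sub (((hdiff₁ b hbIcc).hasDerivWithinAt).const_mul lam)
    have h2 : HasDerivWithinAt f (V₂ b - lam * V₁ b) (Ioo ξ₀ b) b := h1.mono hsub_ξ₀b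
    rw [hasDerivWithinAt_iff_tendsto_slope,
      diff_singleton_eq_self (notMem_Ioo_of_ge le_rfl)] at h2
    refine le_of_tendsto h2 ?_
    filter_upwards [self_mem_nhdsWithin] with x hx
    have hfx : 0 < f x := hfpos_right x ⟨hx.1.le, hx.2⟩
    have hsl : slope f b x = f x / (x - b) := by rw [slope_def_field, hfb]; ring
    rw [hsl]
    exact (div_nonpos_of_nonneg_of_nonpos hfx.le (sub_neg.2 hx.2).le)
  have hU₂a : U₂ a = lam * U₁ a := by
    have := hfa; simp only [hfdef] at this; linarith
  have hU₂b : U₂ b = lam * U₁ b := by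
    have := hfb; simp only [hfdef] at this; linarith
  -- the comparison function G
  set G := fun ξ => Real.exp (k * ξ) * (V₁ ξ * U₂ ξ - V₂ ξ * U₁ ξ) with hGdef
  have hGa : G a ≤ 0 := by
    have hval : G a = Real.exp (k * a) * (U₁ a * (lam * V₁ a - V₂ a)) := by
      simp only [hGdef, hU₂a]; ring
    rw [hval]
    apply mul_nonpos_of_nonneg_of_nonpos (Real.exp_pos _).le
    apply mul_nonpos_of_nonneg_of_nonpos (hU₁nonneg a haIcc)
    linarith
  have hGb : 0 ≤ G b := by
    have hval : G b = Real.exp (k * b) * (U₁ b * (lam * V₁ b - V₂ b)) := by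
      simp only [hGdef, hU₂b]; ring
    rw [hval]
    apply mul_nonneg (Real.exp_pos _).le
    apply mul_nonneg (hU₁nonneg b hbIcc)
    linarith
  -- G is strictly decreasing on [a,b]
  have hanti : StrictAntiOn G (Icc a b) := by
    apply strictAntiOn_of_deriv_neg (convex_Icc a b)
    · apply ContinuousOn.mul
      · exact (Real.continuous_exp.comp (continuous_const.mul continuous_id)).continuousOn
      · exact ((hcV₁.mono habI).mul (hcont₂.mono habI)).sub
          ((hcV₂.mono habI).mul (hcont₁.mono habI))
    · rw [interior_Icc]
      intro ξ hξ
      have hmem : ξ ∈ Ioo 0 L₀ := habIoo hξ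
      have hnh : Icc (0:ℝ) L₀ ∈ 𝓝 ξ := Icc_mem_nhds hmem.1 hmem.2
      have hV₁ξ : V₁ ξ = deriv U₁ ξ := derivWithin_of_mem_nhds hnh
      have hV₂ξ : V₂ ξ = deriv U₂ ξ := derivWithin_of_mem_nhds hnh
      have hU₁d : HasDerivAt U₁ (V₁ ξ) ξ := by
        rw [hV₁ξ]
        exact ((hdiff₁ ξ (mem_of_mem_nhds hnh)).differentiableAt hnh).hasDerivAt
      have hU₂d : HasDerivAt U₂ (V₂ ξ) ξ := by
        rw [hV₂ξ]
        exact ((hdiff₂ ξ (mem_of_mem_nhds hnh)).differentiableAt hnh).hasDerivAt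
      have hC1₁ : ContDiffOn ℝ 1 (deriv U₁) (Ioo 0 L₀) :=
        (hreg₁.mono Ioo_subset_Icc_self).deriv_of_isOpen isOpen_Ioo (by norm_num)
      have hC1₂ : ContDiffOn ℝ 1 (deriv U₂) (Ioo 0 L₀) :=
        (hreg₂.mono Ioo_subset_Icc_self).deriv_of_isOpen isOpen_Ioo (by norm_num)
      have hg1 : HasDerivAt (deriv U₁) (deriv (deriv U₁) ξ) ξ :=
        (((hC1₁.differentiableOn one_ne_zero) ξ hmem).differentiableAt
          (isOpen_Ioo.mem_nhds hmem)).hasDerivAt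
      have hg2 : HasDerivAt (deriv U₂) (deriv (deriv U₂) ξ) ξ :=
        (((hC1₂.differentiableOn one_ne_zero) ξ hmem).differentiableAt
          (isOpen_Ioo.mem_nhds hmem)).hasDerivAt
      have hV₁d : HasDerivAt V₁ (deriv (deriv U₁) ξ) ξ := by
        apply hg1.congr_of_eventuallyEq
        filter_upwards [isOpen_Ioo.mem_nhds hmem] with x hx
        exact derivWithin_of_mem_nhds (Icc_mem_nhds hx.1 hx.2)
      have hV₂d : HasDerivAt V₂ (deriv (deriv U₂) ξ) ξ := by
        apply hg2.congr_of_eventuallyEq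
        filter_upwards [isOpen_Ioo.mem_nhds hmem] with x hx
        exact derivWithin_of_mem_nhds (Icc_mem_nhds hx.1 hx.2)
      set A₁ := deriv (deriv U₁) ξ with hA₁def
      set A₂ := deriv (deriv U₂) ξ with hA₂def
      set e := Real.exp (k * ξ) with hedef
      set val := e * k * (V₁ ξ * U₂ ξ - V₂ ξ * U₁ ξ)
        + e * ((A₁ * U₂ ξ + V₁ ξ * V₂ ξ) - (A₂ * U₁ ξ + V₂ ξ * V₁ ξ)) with hvaldef
      have hGd : HasDerivAt G val ξ := by
        have hexp : HasDerivAt (fun x => Real.exp (k * x)) (Real.exp (k * ξ) * (k * 1)) ξ :=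
          HasDerivAt.exp ((hasDerivAt_id ξ).const_mul k)
        have hH : HasDerivAt (fun x => V₁ x * U₂ x - V₂ x * U₁ x)
            ((A₁ * U₂ ξ + V₁ ξ * V₂ ξ) - (A₂ * U₁ ξ + V₂ ξ * V₁ ξ)) ξ :=
          (hV₁d.mul hU₂d).sub (hV₂d.mul hU₁d)
        have : HasDerivAt (fun x => Real.exp (k * x) * (V₁ x * U₂ x - V₂ x * U₁ x)) _ ξ :=
          hexp.mul hH
        convert this using 1
        simp only [hvaldef, hedef]; ring
      rw [hGd.deriv]
      -- the ODEs at ξ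
      have h1 := hode₁ ξ hmem
      have h2 := hode₂ ξ hmem
      rw [← hV₁ξ, ← hA₁def] at h1
      rw [← hV₂ξ, ← hA₂def] at h2
      -- pointwise positivity and the key algebraic inequality
      have hu₁ : 0 < U₁ ξ := hpos₁ ξ hmem
      have hu₂ : 0 < U₂ ξ := hpos₂ ξ hmem
      have hfx : 0 < f ξ := hfposab ξ hξ
      have hineq : ghat₂ * U₁ ξ < hhat₂ * U₂ ξ := by
        have h3 : lam * U₁ ξ < U₂ ξ := by simp only [hfdef] at hfx; linarith
        have h4 : hhat₂ * (lam * U₁ ξ) < hhat₂ * U₂ ξ := mul_lt_mul_of_pos_left h3 hh₂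
        have h5 : hhat₂ * lam = ghat₂ := by rw [hlam]; field_simp [hlam]
        calc ghat₂ * U₁ ξ = hhat₂ * (lam * U₁ ξ) := by rw [← mul_assoc, h5]
          _ < hhat₂ * U₂ ξ := h4
      have hX₂gt : (ghat₂ * U₁ ξ) ^ n < (hhat₂ * U₂ ξ) ^ n :=
        Real.rpow_lt_rpow (by positivity) hineq hn
      have h5 : (((r₂/r₁) ^ (1/n) : ℝ)) ^ n = r₂ / r₁ := by
        rw [← Real.rpow_mul (by positivity), one_div, inv_mul_cancel₀ hn.ne', Real.rpow_one]
      have key1 : (r₂/r₁) * (hhat₁ * U₁ ξ) ^ n ≤ (ghat₂ * U₁ ξ) ^ n := by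
        have h3 : ((r₂/r₁) ^ (1/n) * hhat₁) * U₁ ξ ≤ ghat₂ * U₁ ξ :=
          mul_le_mul_of_nonneg_right hgh hu₁.le
        have h4 : (((r₂/r₁) ^ (1/n) * hhat₁) * U₁ ξ) ^ n ≤ (ghat₂ * U₁ ξ) ^ n :=
          Real.rpow_le_rpow (by positivity) h3 hn.le
        have h6 : (((r₂/r₁) ^ (1/n) * hhat₁) * U₁ ξ) ^ n
            = ((r₂/r₁) ^ (1/n) : ℝ) ^ n * (hhat₁ * U₁ ξ) ^ n := by
          rw [mul_assoc, Real.mul_rpow (by positivity) (by positivity)]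
        rw [h6, h5] at h4
        exact h4
      have hX₁ : (hhat₁ * U₁ ξ) ^ n ≤ r₁ := hbound ξ ⟨hmem.1.le, hmem.2.le⟩
      have key1' : r₂ * (hhat₁ * U₁ ξ) ^ n ≤ r₁ * (ghat₂ * U₁ ξ) ^ n := by
        have h7 := mul_le_mul_of_nonneg_left key1 hr₁.le
        calc r₂ * (hhat₁ * U₁ ξ) ^ n = r₁ * ((r₂/r₁) * (hhat₁ * U₁ ξ) ^ n) := by
              field_simp
          _ ≤ r₁ * (ghat₂ * U₁ ξ) ^ n := h7
      have hBfac : 0 < (r₁ - (hhat₁ * U₁ ξ) ^ n) - (r₂ - (hhat₂ * U₂ ξ) ^ n) :=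
        arith_bfac hr₁ hr hX₁ key1' hX₂gt
      have hDval : D * val = -e * (U₁ ξ * U₂ ξ *
          ((r₁ - (hhat₁ * U₁ ξ) ^ n) - (r₂ - (hhat₂ * U₂ ξ) ^ n))) := by
        simp only [hvaldef]
        linear_combination (e * U₂ ξ) * h1 - (e * U₁ ξ) * h2
      have hepos : 0 < e := Real.exp_pos _
      have h8 : D * val < 0 := by
        rw [hDval]
        have := mul_pos hepos (mul_pos (mul_pos hu₁ hu₂) hBfac)
        linarith
      by_contra hge
      push_neg at hge
      have := mul_nonneg hD.le hge
      linarith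
  have hfinal : G b < G a := hanti (left_mem_Icc.2 hab.le) (right_mem_Icc.2 hab.le) hab
  linarith
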